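/- Let α be a d-face (d ≥ 1) of the clique complex of a graph G. Then F_d(α) = |T_α|/(d+1) + (d+1) − |P_α|, where T_α and P_α are the transverse and parallel neighbours of α respectively; in particular |T_α| is divisible by d+1. -/

import Mathlib

open Finset

variable {V : Type*} [Fintype V] [DecidableEq V]

def pi (G : SimpleGraph V) (S : Finset V) : Set V := {v | ∀ x ∈ S, G.Adj x v}

def IsFace (G : SimpleGraph V) (d : ℕ) (α : Finset V) : Prop :=
  α.card = d + 1 ∧ G.IsClique (α : Set V)

def Nbr (G : SimpleGraph V) (d : ℕ) (α α' : Finset V) : Prop :=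
  IsFace G d α' ∧ α' ≠ α ∧
    ∃ γ : Finset V, γ.card = d ∧ G.IsClique (γ : Set V) ∧ γ ⊆ α ∧ γ ⊆ α'

def Transv (G : SimpleGraph V) (d : ℕ) (α α' : Finset V) : Prop :=
  Nbr G d α α' ∧ ∃ β : Finset V, IsFace G (d + 1) β ∧ α ⊆ β ∧ α' ⊆ β

def Parl (G : SimpleGraph V) (d : ℕ) (α α' : Finset V) : Prop :=
  Nbr G d α α' ∧ ¬ ∃ β : Finset V, IsFace G (d + 1) β ∧ α ⊆ β ∧ α' ⊆ β

def Nset (G : SimpleGraph V) (d : ℕ) (α : Finset V) : Set (Finset V) := {α' | Nbr G d α α'}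

def Tset (G : SimpleGraph V) (d : ℕ) (α : Finset V) : Set (Finset V) := {α' | Transv G d α α'}

def Pset (G : SimpleGraph V) (d : ℕ) (α : Finset V) : Set (Finset V) := {α' | Parl G d α α'}

def Hset (G : SimpleGraph V) (d : ℕ) (α : Finset V) : Set (Finset V) :=
  {β | IsFace G (d + 1) β ∧ α ⊆ β}

noncomputable def FRC (G : SimpleGraph V) (d : ℕ) (α : Finset V) : ℤ :=
  (Hset G d α).ncard + (d + 1) - (Pset G d α).ncard

lemma key (G : SimpleGraph V) (d : ℕ) (α : Finset V) (hα : IsFace G d α) :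
    (Tset G d α).ncard = (Hset G d α).ncard * (d + 1) := by
  classical
  have hHfin : (Hset G d α).Finite := Set.toFinite _
  set Hf := hHfin.toFinset with hHf
  set f : Finset V × V → Finset V := fun p => p.1.erase p.2 with hf
  have hTset : Tset G d α = ↑((Hf ×ˢ α).image f) := by
    ext α'
    simp only [Finset.coe_image, Set.mem_image, Finset.mem_coe, Finset.mem_product]
    constructor
    · rintro ⟨⟨⟨hcard, hclq⟩, hne, γ, hγc, hγclq, hγα, hγα'⟩, β, hβ, hαβ, hα'β⟩
      -- β = α ∪ α'
      have hcardβ := hβ.1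
      have hsub : α ∪ α' ⊆ β := Finset.union_subset hαβ hα'β
      have hαα' : ¬ α' ⊆ α := fun h => hne (Finset.eq_of_subset_of_card_le h (le_of_eq (hα.1.trans hcard.symm)))
      obtain ⟨v, hvα', hvα⟩ := Finset.not_subset.mp hαα'
      have hcardu : d + 2 ≤ (α ∪ α').card := by
        have : insert v α ⊆ α ∪ α' := by
          intro x hx
          rcases Finset.mem_insert.mp hx with rfl | hx
          · exact Finset.mem_union_right _ hvα'
          · exact Finset.mem_union_left _ hx
        have := Finset.card_le_card this
        rw [Finset.card_insert_of_notMem hvα, hα.1] at this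
        omega
      have hβeq : β = α ∪ α' := by
        refine (Finset.eq_of_subset_of_card_le hsub ?_).symm
        omega
      -- α \ α' = {x}
      have hinter : (α ∩ α').card = d := by
        have := Finset.card_union_add_card_inter α α'
        rw [← hβeq, hcardβ, hα.1, hcard] at this
        omega
      have hsd : (α \ α').card = 1 := by
        have := Finset.card_sdiff_add_card_inter α α'
        rw [hinter, hα.1] at this; omega
      obtain ⟨x, hx⟩ := Finset.card_eq_one.mp hsd
      have hxα : x ∈ α ∧ x ∉ α' := by
        have : x ∈ α \ α' := hx ▸ Finset.mem_singleton_self x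
        exact ⟨(Finset.mem_sdiff.mp this).1, (Finset.mem_sdiff.mp this).2⟩
      refine ⟨⟨β, x⟩, ⟨hHfin.mem_toFinset.mpr ⟨hβ, hαβ⟩, hxα.1⟩, ?_⟩
      -- β.erase x = α'
      have h1 : α' ⊆ β.erase x := fun y hy =>
        Finset.mem_erase.mpr ⟨fun h => hxα.2 (h ▸ hy), hα'β hy⟩
      refine (Finset.eq_of_subset_of_card_le h1 ?_).symm
      rw [Finset.card_erase_of_mem (hαβ hxα.1), hcardβ, hcard]; omega
    · rintro ⟨⟨β, x⟩, ⟨hβH, hxα⟩, rfl⟩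
      obtain ⟨⟨hcardβ, hclqβ⟩, hαβ⟩ := hHfin.mem_toFinset.mp hβH
      have hxβ : x ∈ β := hαβ hxα
      have hcard' : (β.erase x).card = d + 1 := by
        rw [Finset.card_erase_of_mem hxβ, hcardβ]; omega
      obtain ⟨v, hvβα⟩ := Finset.exists_of_ssubset
        (Finset.ssubset_iff_subset_ne.mpr ⟨hαβ, fun h => by rw [← h, hα.1] at hcardβ; omega⟩)
      obtain ⟨hvβ, hvα⟩ := hvβα
      have hvx : v ≠ x := fun h => hvα (h ▸ hxα)
      have hclq' : G.IsClique (↑(β.erase x) : Set V) :=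
        hclqβ.subset (by simp [Finset.coe_subset, Finset.erase_subset])
      have hne' : β.erase x ≠ α := fun h => by
        have : v ∈ α := h ▸ Finset.mem_erase.mpr ⟨hvx, hvβ⟩
        exact hvα this
      refine ⟨⟨⟨hcard', hclq'⟩, hne', α.erase x, ?_, ?_, Finset.erase_subset _ _,
          Finset.erase_subset_erase _ hαβ⟩, β, ⟨hcardβ, hclqβ⟩, hαβ, Finset.erase_subset _ _⟩
      · rw [Finset.card_erase_of_mem hxα, hα.1]; omega
      · exact hα.2.subset (by simp [Finset.coe_subset, Finset.erase_subset])
  -- injectivity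
  have hinj : Set.InjOn f ↑(Hf ×ˢ α) := by
    rintro ⟨β, x⟩ h1 ⟨β', x'⟩ h2 heq
    simp only [Finset.coe_product, Set.mem_prod, Finset.mem_coe,
      hHf, hHfin.mem_toFinset] at h1 h2
    have hxβ : x ∈ β := h1.1.2 h1.2
    have hx'β' : x' ∈ β' := h2.1.2 h2.2
    simp only [hf] at heq
    have hcup : ∀ (b : Finset V) (y : V), b ∈ Hset G d α → y ∈ α → b = α ∪ b.erase y := by
      rintro b y ⟨hb, hab⟩ hy
      apply Finset.Subset.antisymm
      · intro z hz
        by_cases hzy : z = y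
        · exact Finset.mem_union_left _ (hzy ▸ hy)
        · exact Finset.mem_union_right _ (Finset.mem_erase.mpr ⟨hzy, hz⟩)
      · exact Finset.union_subset hab (Finset.erase_subset _ _)
    have hβeq : β = β' := by
      rw [hcup β x h1.1 h1.2, hcup β' x' h2.1 h2.2, heq]
    subst hβeq
    have : x = x' := by
      by_contra hxx
      have : x' ∈ β.erase x := Finset.mem_erase.mpr ⟨Ne.symm hxx, hx'β'⟩
      rw [heq] at this
      exact (Finset.mem_erase.mp this).1 rfl
    rw [this]
  have h1 : (Tset G d α).ncard = ((Hf ×ˢ α).image f).card := by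
    rw [hTset, Set.ncard_coe_finset]
  rw [h1, Finset.card_image_of_injOn (by simpa using hinj), Finset.card_product, hα.1,
    Set.ncard_eq_toFinset_card _ hHfin]

theorem stmt15 (G : SimpleGraph V) (d : ℕ) (hd : 1 ≤ d) (α : Finset V)
    (hα : IsFace G d α) :
    (d + 1) ∣ (Tset G d α).ncard ∧
    FRC G d α = ((Tset G d α).ncard : ℤ) / (d + 1) + (d + 1) - ((Pset G d α).ncard : ℤ) := by
  have hk := key G d α hα
  constructor
  · exact hk ▸ dvd_mul_left _ _
  · have h2 : ((Tset G d α).ncard : ℤ) / (d + 1) = ((Hset G d α).ncard : ℤ) := by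
      rw [hk]; push_cast [Int.mul_ediv_cancel _ (show ((d:ℤ)+1) ≠ 0 by positivity)]; try rfl
    rw [h2, FRC]
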